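/- Let h be an integrable complex-valued function on ℝ, let ω, ω′ ∈ ℝ, and let φ : ℝ² → ℂ be continuous with compact support. Then lim_{ξ→0⁺} (1/ξ) ∫_{ℝ²} φ(t,t′) e^{i(ωt − ω′t′)/ξ} h((t′ − t)/ξ) dt dt′ equals (∫_ℝ φ(t,t) dt) · (∫_ℝ e^{−iωs} h(s) ds) if ω = ω′, and equals 0 if ω ≠ ω′. -/

import Mathlib

open MeasureTheory Filter Real
open scoped Topology NNReal ENNReal FourierTransform

private lemma cov_aux' (F : ℝ × ℝ → ℂ) {ξ : ℝ} (hξ : 0 < ξ) :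
    ∫ p : ℝ × ℝ, F (p.1, p.1 + ξ * p.2) = ξ⁻¹ • ∫ p : ℝ × ℝ, F p := by
  have hξ0 : ξ ≠ 0 := hξ.ne'
  set L : ℝ × ℝ ≃ₜ ℝ × ℝ :=
    ((Homeomorph.refl ℝ).prodCongr (Homeomorph.mulLeft₀ ξ hξ0)).trans
      (Homeomorph.shearAddRight ℝ) with hL
  have hLapp : ∀ p : ℝ × ℝ, L p = (p.1, p.1 + ξ * p.2) := by
    intro p; rfl
  have hsmul : ∀ (c : ℝ≥0),
      (volume : Measure ℝ).prod (c • (volume : Measure ℝ)) =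
        c • ((volume : Measure ℝ).prod volume) := by
    intro c
    refine Measure.prod_eq fun s t hs ht => ?_
    simp only [Measure.prod_prod, Measure.smul_apply, smul_eq_mul, ENNReal.smul_def,
      mul_comm, mul_left_comm]
  have hmap : Measure.map L (volume : Measure (ℝ × ℝ)) =
      (ENNReal.ofReal ξ⁻¹) • volume := by
    have h1 : Measure.map (Prod.map (id : ℝ → ℝ) (fun s => ξ * s))
        ((volume : Measure ℝ).prod volume) =
        (volume : Measure ℝ).prod (ENNReal.ofReal |ξ⁻¹| • volume) := by
      rw [← Measure.map_prod_map _ _ measurable_id (measurable_const_mul ξ),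
        Measure.map_id, Real.map_volume_mul_left hξ0]
    have h2 : Measure.map (fun z : ℝ × ℝ => (z.1, z.1 + z.2))
        ((volume : Measure ℝ).prod volume) = (volume : Measure ℝ).prod volume :=
      (measurePreserving_prod_add (volume : Measure ℝ) volume).map_eq
    have hc : ENNReal.ofReal |ξ⁻¹| = ((ξ⁻¹).toNNReal : ℝ≥0∞) := by
      rw [abs_of_nonneg (inv_nonneg.2 hξ.le)]; rfl
    calc Measure.map L (volume : Measure (ℝ × ℝ))
        = Measure.map (fun z : ℝ × ℝ => (z.1, z.1 + z.2))
            (Measure.map (Prod.map (id : ℝ → ℝ) (fun s => ξ * s)) volume) := by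
          rw [Measure.map_map (by fun_prop) (by fun_prop)]
          rfl
      _ = (ENNReal.ofReal ξ⁻¹) • volume := by
          rw [MeasureTheory.Measure.volume_eq_prod, h1, hc, ← ENNReal.smul_def, hsmul,
            ENNReal.smul_def, Measure.map_smul, h2, ← MeasureTheory.Measure.volume_eq_prod]
          rfl
  calc ∫ p : ℝ × ℝ, F (p.1, p.1 + ξ * p.2)
      = ∫ p : ℝ × ℝ, F (L p) := by simp_rw [hLapp]
    _ = ∫ q, F q ∂(Measure.map L volume) :=
        (L.measurableEmbedding.integral_map F).symm
    _ = ξ⁻¹ • ∫ p : ℝ × ℝ, F p := by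
        rw [hmap, integral_smul_measure, ENNReal.toReal_ofReal (inv_nonneg.2 hξ.le)]

private lemma rl_aux' (ψ : ℝ → ℂ) {a : ℝ} (ha : a ≠ 0) :
    Tendsto (fun ξ : ℝ => ∫ t : ℝ, ψ t * Complex.exp (Complex.I * a * t / ξ))
      (𝓝[>] 0) (𝓝 0) := by
  set w : ℝ → ℝ := fun ξ => -(a / (2 * π)) * ξ⁻¹ with hw
  have hptw : ∀ ξ t : ℝ,
      ψ t * Complex.exp (Complex.I * a * t / ξ) = 𝐞 (-(t * w ξ)) • ψ t := by
    intro ξ t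
    rw [Circle.smul_def, Real.fourierChar_apply, mul_comm]
    congr 1
    have h2π : (2 * π : ℝ) ≠ 0 := by positivity
    have : 2 * π * -(t * w ξ) = a * t / ξ := by
      rw [hw]
      calc 2 * π * -(t * (-(a / (2 * π)) * ξ⁻¹)) = a / (2 * π) * (2 * π) * (t * ξ⁻¹) := by ring
        _ = a * (t * ξ⁻¹) := by rw [div_mul_cancel₀ _ h2π]
        _ = a * t / ξ := by rw [div_eq_mul_inv]; ring
    rw [this]
    push_cast
    ring
  have hwt : Tendsto w (𝓝[>] 0) (cocompact ℝ) := by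
    rw [cocompact_eq_atBot_atTop]
    rcases lt_or_gt_of_ne ha with hneg | hpos
    · have hc : (0 : ℝ) < -(a / (2 * π)) := by
        rw [neg_pos]
        exact div_neg_of_neg_of_pos hneg (by positivity)
      exact (Tendsto.const_mul_atTop hc tendsto_inv_nhdsGT_zero).mono_right le_sup_right
    · have hc : -(a / (2 * π)) < 0 := by
        rw [neg_lt, neg_zero]
        exact div_pos hpos (by positivity)
      exact (Tendsto.const_mul_atTop_of_neg hc tendsto_inv_nhdsGT_zero).mono_right le_sup_left
  have := (Real.tendsto_integral_exp_smul_cocompact ψ).comp hwt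
  simpa only [Function.comp_def, ← hptw] using this

theorem lowDensity_two_point_function_limit
    (h : ℝ → ℂ) (hh : Integrable h)
    (ω ω' : ℝ)
    (φ : ℝ × ℝ → ℂ) (hφ : Continuous φ) (hφc : HasCompactSupport φ) :
    Tendsto
      (fun ξ : ℝ => (1 / ξ : ℂ) *
        ∫ p : ℝ × ℝ, φ p *
          Complex.exp (Complex.I * (ω * p.1 - ω' * p.2) / ξ) * h ((p.2 - p.1) / ξ))
      (𝓝[>] 0)
      (𝓝 (if ω = ω' then
            (∫ t : ℝ, φ (t, t)) * ∫ s : ℝ, Complex.exp (-(Complex.I * ω * s)) * h s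
          else 0)) := by
  classical
  set a : ℝ := ω - ω' with ha_def
  set K : Set ℝ := Prod.fst '' tsupport φ with hK_def
  have hKcomp : IsCompact K := hφc.image continuous_fst
  have hKm : MeasurableSet K := hKcomp.isClosed.measurableSet
  obtain ⟨C, hC⟩ := hφc.exists_bound_of_continuous hφ
  set B : ℝ → ℝ := K.indicator (fun _ => C) with hB_def
  have hB1 : ∀ ε t : ℝ, ‖φ (t, t + ε)‖ ≤ B t := by
    intro ε t
    by_cases ht : t ∈ K
    · simpa [hB_def, Set.indicator_of_mem ht] using hC (t, t + ε)
    · have hz : φ (t, t + ε) = 0 := by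
        by_contra hne
        exact ht ⟨(t, t + ε), subset_tsupport φ hne, rfl⟩
      simp [hB_def, Set.indicator_of_notMem ht, hz]
  have hB0 : ∀ t : ℝ, ‖φ (t, t)‖ ≤ B t := fun t => by simpa using hB1 0 t
  have hBint : Integrable B := by
    rw [hB_def, integrable_indicator_iff hKm]
    exact integrableOn_const hKcomp.measure_lt_top.ne
  have hInt : ∀ g : ℝ → ℂ, Continuous g → (∀ t, ‖g t‖ ≤ B t) → Integrable g :=
    fun g hg hb => hBint.mono' hg.aestronglyMeasurable (Eventually.of_forall hb)
  have hE1 : ∀ b ξ t : ℝ, ‖Complex.exp (Complex.I * b * t / ξ)‖ = 1 := by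
    intro b ξ t
    rw [show Complex.I * (b : ℂ) * (t : ℂ) / (ξ : ℂ)
        = ((b * t / ξ : ℝ) : ℂ) * Complex.I by push_cast; ring]
    rw [Complex.norm_exp_ofReal_mul_I]
  have hE2 : ∀ s : ℝ, ‖Complex.exp (-(Complex.I * ω' * s))‖ = 1 := by
    intro s
    rw [show -(Complex.I * (ω' : ℂ) * (s : ℂ))
        = ((-(ω' * s) : ℝ) : ℂ) * Complex.I by push_cast; ring]
    rw [Complex.norm_exp_ofReal_mul_I]
  have hcontφ : ∀ ε : ℝ, Continuous fun t : ℝ => φ (t, t + ε) :=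
    fun ε => hφ.comp (continuous_id.prodMk (continuous_id.add continuous_const))
  have hcontE : ∀ b ξ : ℝ, Continuous fun t : ℝ =>
      Complex.exp (Complex.I * b * t / ξ) := by
    intro b ξ
    exact Complex.continuous_exp.comp (by fun_prop)
  have hcont1 : ∀ ε ξ : ℝ, Continuous fun t : ℝ =>
      φ (t, t + ε) * Complex.exp (Complex.I * a * t / ξ) :=
    fun ε ξ => (hcontφ ε).mul (hcontE a ξ)
  have hint1 : ∀ ε ξ : ℝ, Integrable fun t : ℝ =>
      φ (t, t + ε) * Complex.exp (Complex.I * a * t / ξ) := by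
    intro ε ξ
    refine hInt _ (hcont1 ε ξ) fun t => ?_
    rw [norm_mul, hE1, mul_one]
    exact hB1 ε t
  have hint2 : ∀ ξ : ℝ, Integrable fun t : ℝ =>
      φ (t, t) * Complex.exp (Complex.I * a * t / ξ) := by
    intro ξ
    have := hint1 0 ξ
    simpa [add_zero] using this
  -- Step A1 : L¹ continuity of translation (via dominated convergence)
  have hA1 : Tendsto (fun ε : ℝ => ∫ t : ℝ, ‖φ (t, t + ε) - φ (t, t)‖)
      (𝓝 0) (𝓝 0) := by
    have := tendsto_integral_filter_of_dominated_convergence (μ := volume)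
        (l := 𝓝 (0 : ℝ)) (F := fun ε t => ‖φ (t, t + ε) - φ (t, t)‖)
        (f := fun _ => (0 : ℝ)) (bound := fun t => 2 * B t)
        (Eventually.of_forall fun ε =>
          (((hcontφ ε).sub
            (hφ.comp (continuous_id.prodMk continuous_id))).norm).aestronglyMeasurable)
        (Eventually.of_forall fun ε => ae_of_all _ fun t => by
          show ‖‖φ (t, t + ε) - φ (t, t)‖‖ ≤ 2 * B t
          rw [norm_norm]
          have := hB1 ε t
          have := hB0 t
          have := norm_sub_le (φ (t, t + ε)) (φ (t, t))
          linarith)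
        (hBint.const_mul 2)
        (ae_of_all _ fun t => by
          have hcont : Continuous fun ε : ℝ => ‖φ (t, t + ε) - φ (t, t)‖ :=
            ((hφ.comp (continuous_const.prodMk
              (continuous_const.add continuous_id))).sub continuous_const).norm
          have := hcont.tendsto 0
          simpa using this)
    simpa using this
  -- Step A : inner limit
  have hA : ∀ s : ℝ, Tendsto (fun ξ : ℝ =>
      ∫ t : ℝ, φ (t, t + ξ * s) * Complex.exp (Complex.I * a * t / ξ))
      (𝓝[>] 0) (𝓝 (if a = 0 then ∫ t : ℝ, φ (t, t) else 0)) := by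
    intro s
    have hsplit : ∀ ξ : ℝ,
        (∫ t : ℝ, φ (t, t + ξ * s) * Complex.exp (Complex.I * a * t / ξ))
        = (∫ t : ℝ, (φ (t, t + ξ * s) - φ (t, t)) *
            Complex.exp (Complex.I * a * t / ξ))
          + ∫ t : ℝ, φ (t, t) * Complex.exp (Complex.I * a * t / ξ) := by
      intro ξ
      have hi3 : Integrable fun t : ℝ => (φ (t, t + ξ * s) - φ (t, t)) *
          Complex.exp (Complex.I * a * t / ξ) := by
        simp only [sub_mul]
        exact (hint1 _ _).sub (hint2 _)
      rw [← integral_add hi3 (hint2 _)]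
      congr 1
      funext t
      ring
    have hD : Tendsto (fun ξ : ℝ => ∫ t : ℝ, (φ (t, t + ξ * s) - φ (t, t)) *
        Complex.exp (Complex.I * a * t / ξ)) (𝓝[>] 0) (𝓝 0) := by
      apply squeeze_zero_norm
        (a := fun ξ : ℝ => ∫ t : ℝ, ‖φ (t, t + ξ * s) - φ (t, t)‖)
      · intro ξ
        refine (norm_integral_le_integral_norm _).trans (le_of_eq ?_)
        congr 1
        funext t
        rw [norm_mul, hE1, mul_one]
      · have hts : Tendsto (fun ξ : ℝ => ξ * s) (𝓝[>] 0) (𝓝 0) := by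
          have := (continuous_id.mul (continuous_const (y := s))).tendsto (0 : ℝ)
          replace this : Tendsto (fun ξ : ℝ => ξ * s) (𝓝 0) (𝓝 0) := by simpa [Pi.mul_def] using this
          exact this.mono_left nhdsWithin_le_nhds
        exact hA1.comp hts
    have hR : Tendsto (fun ξ : ℝ =>
        ∫ t : ℝ, φ (t, t) * Complex.exp (Complex.I * a * t / ξ))
        (𝓝[>] 0) (𝓝 (if a = 0 then ∫ t : ℝ, φ (t, t) else 0)) := by
      by_cases haz : a = 0
      · rw [if_pos haz]
        simp only [haz, Complex.ofReal_zero, mul_zero, zero_mul, zero_div,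
          Complex.exp_zero, mul_one]
        exact tendsto_const_nhds
      · rw [if_neg haz]
        exact rl_aux' _ haz
    have := hD.add hR
    rw [zero_add] at this
    exact this.congr fun ξ => (hsplit ξ).symm
  -- uniform bound for the inner integral
  set M : ℝ := ∫ t : ℝ, B t with hM_def
  have hnormI : ∀ ξ s : ℝ,
      ‖∫ t : ℝ, φ (t, t + ξ * s) * Complex.exp (Complex.I * a * t / ξ)‖ ≤ M := by
    intro ξ s
    refine norm_integral_le_of_norm_le hBint (ae_of_all _ fun t => ?_)
    rw [norm_mul, hE1, mul_one]
    exact hB1 _ t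
  -- outer dominated convergence
  have hcontI : ∀ ξ : ℝ, Continuous fun s : ℝ =>
      ∫ t : ℝ, φ (t, t + ξ * s) * Complex.exp (Complex.I * a * t / ξ) := by
    intro ξ
    apply continuous_of_dominated (bound := B)
    · exact fun s => (hcont1 (ξ * s) ξ).aestronglyMeasurable
    · intro s
      refine ae_of_all _ fun t => ?_
      rw [norm_mul, hE1, mul_one]
      exact hB1 _ t
    · exact hBint
    · refine ae_of_all _ fun t => ?_
      exact ((hφ.comp (continuous_const.prodMk
        (continuous_const.add (continuous_const.mul continuous_id)))).mul
        continuous_const)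
  have hB_out : Tendsto (fun ξ : ℝ => ∫ s : ℝ,
      (∫ t : ℝ, φ (t, t + ξ * s) * Complex.exp (Complex.I * a * t / ξ)) *
        (Complex.exp (-(Complex.I * ω' * s)) * h s))
      (𝓝[>] 0)
      (𝓝 (∫ s : ℝ, (if a = 0 then ∫ t : ℝ, φ (t, t) else 0) *
        (Complex.exp (-(Complex.I * ω' * s)) * h s))) := by
    refine tendsto_integral_filter_of_dominated_convergence
      (bound := fun s => M * ‖h s‖)
      (Eventually.of_forall fun ξ => ?_)
      (Eventually.of_forall fun ξ => ae_of_all _ fun s => ?_)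
      (hh.norm.const_mul M)
      (ae_of_all _ fun s => (hA s).mul_const _)
    · exact (hcontI ξ).aestronglyMeasurable.mul
        (((Complex.continuous_exp.comp (by fun_prop)).aestronglyMeasurable).mul hh.1)
    · rw [norm_mul, norm_mul, hE2, one_mul]
      exact mul_le_mul_of_nonneg_right (hnormI ξ s) (norm_nonneg _)
  -- identification of the rescaled integral
  have hEq : (fun ξ : ℝ => ∫ s : ℝ,
      (∫ t : ℝ, φ (t, t + ξ * s) * Complex.exp (Complex.I * a * t / ξ)) *
        (Complex.exp (-(Complex.I * ω' * s)) * h s))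
      =ᶠ[𝓝[>] (0 : ℝ)]
      (fun ξ : ℝ => (1 / ξ : ℂ) *
        ∫ p : ℝ × ℝ, φ p *
          Complex.exp (Complex.I * (ω * p.1 - ω' * p.2) / ξ) * h ((p.2 - p.1) / ξ)) := by
    filter_upwards [self_mem_nhdsWithin] with ξ hξ
    have hξpos : (0 : ℝ) < ξ := hξ
    have hξ0 : (ξ : ℝ) ≠ 0 := hξpos.ne'
    have hξC : (ξ : ℂ) ≠ 0 := by exact_mod_cast hξ0
    set G : ℝ × ℝ → ℂ := fun p =>
      (φ (p.1, p.1 + ξ * p.2) * Complex.exp (Complex.I * a * p.1 / ξ) *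
        Complex.exp (-(Complex.I * ω' * p.2))) * h p.2 with hG_def
    have hGint : Integrable G ((volume : Measure ℝ).prod (volume : Measure ℝ)) := by
      apply Integrable.mono' (g := fun p : ℝ × ℝ => B p.1 * ‖h p.2‖)
        (hBint.mul_prod hh.norm)
      · refine AEStronglyMeasurable.mul ?_ hh.1.comp_snd
        refine Continuous.aestronglyMeasurable ?_
        refine Continuous.mul (Continuous.mul ?_ ?_) ?_
        · exact hφ.comp (continuous_fst.prodMk
            (continuous_fst.add (continuous_const.mul continuous_snd)))
        · exact Complex.continuous_exp.comp (by fun_prop)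
        · exact Complex.continuous_exp.comp (by fun_prop)
      · refine ae_of_all _ fun p => ?_
        rw [hG_def]
        simp only
        rw [norm_mul, norm_mul, norm_mul, hE1, hE2, mul_one, mul_one]
        exact mul_le_mul_of_nonneg_right (hB1 _ _) (norm_nonneg _)
    set Φ : ℝ × ℝ → ℂ := fun p =>
      φ p * Complex.exp (Complex.I * (ω * p.1 - ω' * p.2) / ξ) * h ((p.2 - p.1) / ξ)
      with hΦ_def
    have step1 : (1 / ξ : ℂ) * (∫ p : ℝ × ℝ, Φ p)
        = ∫ p : ℝ × ℝ, Φ (p.1, p.1 + ξ * p.2) := by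
      rw [cov_aux' Φ hξpos, Complex.real_smul, Complex.ofReal_inv, one_div]
    have step2 : ∀ p : ℝ × ℝ, Φ (p.1, p.1 + ξ * p.2) = G p := by
      rintro ⟨t, s⟩
      have h1 : (t + ξ * s - t) / ξ = s := by field_simp; ring
      have h2 : Complex.I * ((ω : ℂ) * t - (ω' : ℂ) * ((t + ξ * s : ℝ) : ℂ)) / ξ
          = Complex.I * (a : ℂ) * t / ξ + -(Complex.I * (ω' : ℂ) * s) := by
        rw [ha_def]
        push_cast
        field_simp
        ring
      simp only [hΦ_def, hG_def, h1, h2, Complex.exp_add]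
      ring
    have step3 : (∫ p : ℝ × ℝ, G p) = ∫ s : ℝ, ∫ t : ℝ, G (t, s) := by
      rw [MeasureTheory.Measure.volume_eq_prod]
      exact integral_prod_symm G hGint
    have step4 : ∀ s : ℝ, (∫ t : ℝ, G (t, s)) =
        (∫ t : ℝ, φ (t, t + ξ * s) * Complex.exp (Complex.I * a * t / ξ)) *
          (Complex.exp (-(Complex.I * ω' * s)) * h s) := by
      intro s
      simp only [hG_def]
      rw [integral_mul_const, integral_mul_const, mul_assoc]
    calc (∫ s : ℝ, (∫ t : ℝ, φ (t, t + ξ * s) *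
            Complex.exp (Complex.I * a * t / ξ)) *
          (Complex.exp (-(Complex.I * ω' * s)) * h s))
        = ∫ s : ℝ, ∫ t : ℝ, G (t, s) := by
          congr 1
          funext s
          exact (step4 s).symm
      _ = ∫ p : ℝ × ℝ, G p := step3.symm
      _ = ∫ p : ℝ × ℝ, Φ (p.1, p.1 + ξ * p.2) := by
          congr 1
          funext p
          exact (step2 p).symm
      _ = (1 / ξ : ℂ) * ∫ p : ℝ × ℝ, Φ p := step1.symm
  have hmain := hB_out.congr' hEq
  have hval : (∫ s : ℝ, (if a = 0 then ∫ t : ℝ, φ (t, t) else 0) *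
      (Complex.exp (-(Complex.I * ω' * s)) * h s))
      = (if ω = ω' then
          (∫ t : ℝ, φ (t, t)) * ∫ s : ℝ, Complex.exp (-(Complex.I * ω * s)) * h s
        else 0) := by
    by_cases hww : ω = ω'
    · have haz : a = 0 := by rw [ha_def, hww, sub_self]
      rw [if_pos haz, if_pos hww, ← hww]
      exact integral_const_mul _ _
    · have haz : a ≠ 0 := sub_ne_zero_of_ne hww
      rw [if_neg haz, if_neg hww]
      simp
  rwa [hval] at hmain
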